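/- Let F : ℝ^d → ℝ^d be a C^m-smooth vector field (m ≥ 1), let x̂ be an equilibrium point (F(x̂) = 0), and let W : ℝ^d → ℝ be a C^r-smooth function with 1 ≤ r ≤ m+1 which is proper, positive on ℝ^d \ {x̂}, vanishes at x̂, and satisfies L_F W(x) ≤ 0 for all x. Let P ⊂ ℝ^d be a closed bounded neighbourhood of x̂ which is positively invariant: every differentiable curve x : [0,∞) → ℝ^d with x'(t) = F(x(t)) and x(0) ∈ P satisfies x(t) ∈ P for all t ≥ 0. Assume that for every x ∈ P \ {x̂} the vector (L_F W(x), L_F² W(x), …, L_F^r W(x)) is nonzero. Then x̂ is asymptotically stable and P is contained in its basin of attraction; that is: (i) for every ε > 0 there exists δ > 0 such that every solution curve x : [0,∞) → ℝ^d with x'(t) = F(x(t)) and |x(0) − x̂| < δ satisfies |x(t) − x̂| < ε for all t ≥ 0, and (ii) every solution curve x : [0,∞) → ℝ^d with x'(t) = F(x(t)) and x(0) ∈ P satisfies x(t) → x̂ as t → ∞. -/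

import Mathlib

open Finset Set Metric Filter Real

noncomputable section

/-- Iterated Lie derivative `L_F^k g` of `g` along the vector field `F`. -/
def iterLie {E : Type*} [NormedAddCommGroup E] [NormedSpace ℝ E]
    (F : E → E) : ℕ → (E → ℝ) → E → ℝ
  | 0 => fun g => g
  | k + 1 => fun g x => fderiv ℝ (iterLie F k g) x (F x)

section Helpers
variable {E : Type*} [NormedAddCommGroup E] [NormedSpace ℝ E]

lemma iterLie_contDiff {m r : ℕ} {F : E → E} {W : E → ℝ}
    (hF : ContDiff ℝ (m:ℕ∞) F) (hW : ContDiff ℝ (r:ℕ∞) W) (hrm : r ≤ m + 1) :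
    ∀ k, k ≤ r → ContDiff ℝ ((r - k : ℕ) : WithTop ℕ∞) (iterLie F k W) := by
  intro k
  induction k with
  | zero => intro _; simpa [iterLie] using hW
  | succ k ih =>
    intro hk
    have hk' : k ≤ r := Nat.le_of_succ_le hk
    have IH := ih hk'
    have h1 : ((r - (k+1) : ℕ) : WithTop ℕ∞) + 1 ≤ ((r - k : ℕ) : WithTop ℕ∞) := by
      have h2 : (r - (k+1)) + 1 = r - k := by omega
      rw [show ((r - (k+1) : ℕ) : WithTop ℕ∞) + 1 = (((r - (k+1)) + 1 : ℕ) : WithTop ℕ∞) by push_cast; ring, h2]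
    have hfd : ContDiff ℝ ((r - (k+1) : ℕ) : WithTop ℕ∞) (fderiv ℝ (iterLie F k W)) :=
      IH.fderiv_right h1
    have hF' : ContDiff ℝ ((r - (k+1) : ℕ) : WithTop ℕ∞) F :=
      hF.of_le (by exact_mod_cast Nat.cast_le.mpr (by omega : r - (k+1) ≤ m) : ((r-(k+1):ℕ):WithTop ℕ∞) ≤ (m:ℕ∞))
    exact hfd.clm_apply hF'

lemma hasDerivAt_iterLie_comp {m r : ℕ} {F : E → E} {W : E → ℝ}
    (hF : ContDiff ℝ (m:ℕ∞) F) (hW : ContDiff ℝ (r:ℕ∞) W) (hrm : r ≤ m + 1)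
    {k : ℕ} (hk : k + 1 ≤ r) {x : ℝ → E} {t : ℝ} (hx : HasDerivAt x (F (x t)) t) :
    HasDerivAt (fun s => iterLie F k W (x s)) (iterLie F (k+1) W (x t)) t := by
  have hcd := iterLie_contDiff hF hW hrm k (by omega)
  have h1 : (1:WithTop ℕ∞) ≤ ((r - k : ℕ) : WithTop ℕ∞) := by exact_mod_cast (by omega : 1 ≤ r - k)
  have hd : DifferentiableAt ℝ (iterLie F k W) (x t) :=
    (hcd.differentiable (zero_lt_one.trans_le h1).ne').differentiableAt
  exact hd.hasFDerivAt.comp_hasDerivAt t hx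

lemma solution_antitone {m r : ℕ} {F : E → E} {W : E → ℝ}
    (hF : ContDiff ℝ (m:ℕ∞) F) (hW : ContDiff ℝ (r:ℕ∞) W) (hrm : r ≤ m + 1) (hr1 : 1 ≤ r)
    (hnonstrict : ∀ p, iterLie F 1 W p ≤ 0)
    {x : ℝ → E} (hx : ∀ t : ℝ, 0 ≤ t → HasDerivAt x (F (x t)) t) :
    ∀ s t : ℝ, 0 ≤ s → s ≤ t → W (x t) ≤ W (x s) := by
  have hder : ∀ t : ℝ, 0 ≤ t →
      HasDerivAt (fun s => W (x s)) (iterLie F 1 W (x t)) t := fun t ht =>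
    hasDerivAt_iterLie_comp hF hW hrm (k := 0) hr1 (hx t ht)
  have hanti : AntitoneOn (fun s => W (x s)) (Ici 0) := by
    apply antitoneOn_of_deriv_nonpos (convex_Ici 0)
    · exact fun t ht => (hder t ht).continuousAt.continuousWithinAt
    · intro t ht
      rw [interior_Ici] at ht
      exact ((hder t (le_of_lt ht)).differentiableAt).differentiableWithinAt
    · intro t ht
      rw [interior_Ici] at ht
      rw [(hder t (le_of_lt ht)).deriv]
      exact hnonstrict _
  exact fun s t hs hst => hanti hs (le_trans hs hst) hst

end Helpers
theorem stmt11 (d m r : ℕ) (hm : 1 ≤ m) (hr1 : 1 ≤ r) (hrm : r ≤ m + 1)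
    (F : EuclideanSpace ℝ (Fin d) → EuclideanSpace ℝ (Fin d)) (hF : ContDiff ℝ m F)
    (xhat : EuclideanSpace ℝ (Fin d)) (heq : F xhat = 0)
    (W : EuclideanSpace ℝ (Fin d) → ℝ) (hW : ContDiff ℝ r W)
    (hproper : ∀ c : ℝ, IsCompact {x | W x ≤ c})
    (hWpos : ∀ x, x ≠ xhat → 0 < W x) (hWhat : W xhat = 0)
    (hnonstrict : ∀ x, iterLie F 1 W x ≤ 0)
    (P : Set (EuclideanSpace ℝ (Fin d)))
    (hPclosed : IsClosed P) (hPbounded : Bornology.IsBounded P) (hPnbhd : P ∈ nhds xhat)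
    (hPinv : ∀ x : ℝ → EuclideanSpace ℝ (Fin d),
      (∀ t : ℝ, 0 ≤ t → HasDerivAt x (F (x t)) t) → x 0 ∈ P → ∀ t : ℝ, 0 ≤ t → x t ∈ P)
    (hnonzero : ∀ y ∈ P \ {xhat}, ∃ k ∈ Finset.Icc 1 r, iterLie F k W y ≠ 0) :
    (∀ ε > (0 : ℝ), ∃ δ > (0 : ℝ),
      ∀ x : ℝ → EuclideanSpace ℝ (Fin d),
        (∀ t : ℝ, 0 ≤ t → HasDerivAt x (F (x t)) t) → dist (x 0) xhat < δ →
          ∀ t : ℝ, 0 ≤ t → dist (x t) xhat < ε) ∧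
    (∀ x : ℝ → EuclideanSpace ℝ (Fin d),
      (∀ t : ℝ, 0 ≤ t → HasDerivAt x (F (x t)) t) → x 0 ∈ P →
        Filter.Tendsto x Filter.atTop (nhds xhat)) := by
  have hWc : Continuous W := hW.continuous
  have hmono : ∀ x : ℝ → EuclideanSpace ℝ (Fin d),
      (∀ t : ℝ, 0 ≤ t → HasDerivAt x (F (x t)) t) →
      ∀ s t : ℝ, 0 ≤ s → s ≤ t → W (x t) ≤ W (x s) :=
    fun x hx => solution_antitone hF hW hrm hr1 hnonstrict hx
  have hW0 : ∀ p, 0 ≤ W p := by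
    intro p
    by_cases h : p = xhat
    · simp [h, hWhat]
    · exact (hWpos p h).le
  have hxcont : ∀ (x : ℝ → EuclideanSpace ℝ (Fin d)),
      (∀ t : ℝ, 0 ≤ t → HasDerivAt x (F (x t)) t) →
      ∀ t : ℝ, 0 ≤ t → ContinuousAt x t := fun x hx t ht => (hx t ht).continuousAt
  constructor
  · -- stability
    intro ε hε
    rcases subsingleton_or_nontrivial (EuclideanSpace ℝ (Fin d)) with hsub | hnt
    · refine ⟨1, one_pos, fun x hx h0 t ht => ?_⟩
      have : x t = xhat := Subsingleton.elim _ _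
      simpa [this] using hε
    · -- minimum of W on the sphere of radius ε
      have hsph : (Metric.sphere xhat ε).Nonempty :=
        NormedSpace.sphere_nonempty.mpr hε.le
      have hsphc : IsCompact (Metric.sphere xhat ε) := isCompact_sphere _ _
      obtain ⟨z, hz, hzmin⟩ := hsphc.exists_isMinOn hsph hWc.continuousOn
      have hzne : z ≠ xhat := by
        intro h
        rw [h] at hz
        simp [Metric.mem_sphere, dist_self] at hz
        exact hε.ne hz
      set μ := W z with hμ
      have hμpos : 0 < μ := hWpos z hzne
      obtain ⟨δ, hδpos, hδ⟩ : ∃ δ > 0, ∀ p, dist p xhat < δ → W p < μ := by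
        obtain ⟨δ, hδpos, h⟩ := Metric.continuousAt_iff.mp (hWc.continuousAt (x := xhat)) μ hμpos
        refine ⟨δ, hδpos, fun p hp => ?_⟩
        have := h hp
        rw [hWhat] at this
        have := abs_lt.mp (by simpa [Real.dist_eq] using this)
        linarith [this.2]
      refine ⟨min δ ε, lt_min hδpos hε, fun x hx h0 t ht => ?_⟩
      by_contra hcon
      push_neg at hcon
      have hc : ContinuousOn (fun s => dist (x s) xhat) (Set.Icc 0 t) := fun s hs =>
        ((hxcont x hx s hs.1).continuousWithinAt.dist continuousWithinAt_const)
      have h0' : dist (x 0) xhat < ε := lt_of_lt_of_le h0 (min_le_right _ _)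
      obtain ⟨s, hs, hseq⟩ : ∃ s ∈ Set.Icc (0:ℝ) t, dist (x s) xhat = ε := by
        have := intermediate_value_Icc ht hc
        exact this ⟨h0'.le, hcon⟩
      have h1 : μ ≤ W (x s) := hzmin (Metric.mem_sphere.mpr hseq)
      have h2 : W (x s) ≤ W (x 0) := hmono x hx 0 s le_rfl hs.1
      have h3 : W (x 0) < μ := hδ _ (lt_of_lt_of_le h0 (min_le_left _ _))
      linarith
  · -- attraction
    intro x hx hx0
    have hxP : ∀ t : ℝ, 0 ≤ t → x t ∈ P := hPinv x hx hx0
    have hPcompact : IsCompact P := Metric.isCompact_of_isClosed_isBounded hPclosed hPbounded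
    set f : ℝ → ℝ := fun t => W (x (max t 0)) with hfdef
    have hfanti : Antitone f := fun s t hst =>
      hmono x hx (max s 0) (max t 0) (le_max_right _ _) (max_le_max hst le_rfl)
    have hbdd : BddBelow (Set.range f) := ⟨0, fun v hv => by
      obtain ⟨t, ht⟩ := hv; rw [← ht]; exact hW0 _⟩
    set L := ⨅ t, f t with hLdef
    have hL : Filter.Tendsto f Filter.atTop (nhds L) := tendsto_atTop_ciInf hfanti hbdd
    have hLW : Filter.Tendsto (fun t => W (x t)) Filter.atTop (nhds L) := by
      apply hL.congr'
      filter_upwards [Filter.eventually_ge_atTop (0:ℝ)] with t ht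
      simp [hfdef, max_eq_left ht]
    have hL0 : 0 ≤ L := le_ciInf fun t => hW0 _
    rcases eq_or_lt_of_le hL0 with hL0' | hLpos
    · -- L = 0 : the solution converges to xhat
      rw [Filter.tendsto_def]
      intro U hU
      haveI : Nonempty {c : ℝ // 0 < c} := ⟨⟨1, one_pos⟩⟩
      have hdir : Directed (· ⊇ ·) (fun c : {c : ℝ // 0 < c} => P ∩ {p | W p ≤ c.1}) := by
        intro a b
        refine ⟨⟨min a.1 b.1, lt_min a.2 b.2⟩, ?_, ?_⟩
        · intro p hp
          exact ⟨hp.1, show W p ≤ a.1 from le_trans hp.2 (min_le_left _ _)⟩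
        · intro p hp
          exact ⟨hp.1, show W p ≤ b.1 from le_trans hp.2 (min_le_right _ _)⟩
      have hVc : ∀ c : {c : ℝ // 0 < c}, IsCompact (P ∩ {p | W p ≤ c.1}) := fun c =>
        hPcompact.inter_right (isClosed_le hWc continuous_const)
      have hVcl : ∀ c : {c : ℝ // 0 < c}, IsClosed (P ∩ {p | W p ≤ c.1}) := fun c =>
        hPclosed.inter (isClosed_le hWc continuous_const)
      have hInt : ∀ p ∈ ⋂ c : {c : ℝ // 0 < c}, P ∩ {p | W p ≤ c.1}, U ∈ nhds p := by
        intro p hp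
        rw [Set.mem_iInter] at hp
        have hWp : W p ≤ 0 := by
          by_contra h
          push_neg at h
          have h2 := (hp ⟨W p / 2, by linarith⟩).2
          simp only [Set.mem_setOf_eq] at h2
          linarith
        have hpx : p = xhat := by
          by_contra hne
          exact absurd hWp (not_le.mpr (hWpos p hne))
        rwa [hpx]
      obtain ⟨c, hc⟩ := exists_subset_nhds_of_isCompact' hdir hVc hVcl hInt
      have h1 : ∀ᶠ t : ℝ in Filter.atTop, W (x t) < c.1 := by
        apply hLW.eventually_lt_const
        rw [← hL0']; exact c.2
      filter_upwards [h1, Filter.eventually_ge_atTop (0:ℝ)] with t h1t h0t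
      exact hc ⟨hxP t h0t, h1t.le⟩
    · -- L > 0 : contradiction
      exfalso
      have hseq : ∀ n : ℕ, x n ∈ P := fun n => hxP n (Nat.cast_nonneg n)
      obtain ⟨y, hyP, φ, hφmono, hφlim⟩ := hPcompact.tendsto_subseq hseq
      have hφatTop : Filter.Tendsto (fun n => ((φ n : ℕ) : ℝ)) Filter.atTop Filter.atTop :=
        tendsto_natCast_atTop_atTop.comp hφmono.tendsto_atTop
      have hWy : W y = L := by
        refine tendsto_nhds_unique ((hWc.continuousAt.tendsto).comp hφlim) ?_
        exact hLW.comp hφatTop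
      have hyne : y ≠ xhat := by
        intro h
        rw [h, hWhat] at hWy
        exact hLpos.ne hWy
      have hF1 : ContDiff ℝ 1 F := hF.of_le (by exact_mod_cast Nat.one_le_cast.mpr hm)
      obtain ⟨K, t0, ht0, hKlip⟩ := (hF1.contDiffAt (x := y)).exists_lipschitzOnWith
      obtain ⟨ρ, hρpos, hρball⟩ := Metric.nhds_basis_closedBall.mem_iff.mp ht0
      have hlip : LipschitzOnWith K F (Metric.closedBall y ρ) := hKlip.mono hρball
      obtain ⟨ψ, hψ0, ε, hεpos, hψ⟩ :=
        (hF1.contDiffAt (x := y)).exists_forall_mem_closedBall_exists_eq_forall_mem_Ioo_hasDerivAt₀ (0:ℝ)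
      have hψc0 : ContinuousAt ψ 0 :=
        (hψ 0 ⟨by linarith, by linarith⟩).continuousAt
      obtain ⟨η, hηpos, hη⟩ := Metric.continuousAt_iff.mp hψc0 (ρ/4) (by linarith)
      set τ := min (ε/2) (η/2) with hτdef
      have hτpos : 0 < τ := lt_min (by linarith) (by linarith)
      have hτε : τ < ε := lt_of_le_of_lt (min_le_left _ _) (by linarith)
      have hψIcc : ∀ s ∈ Set.Icc (0:ℝ) τ, HasDerivAt ψ (F (ψ s)) s := fun s hs =>
        hψ s ⟨by linarith [hs.1], by linarith [hs.2]⟩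
      have hψball : ∀ s ∈ Set.Icc (0:ℝ) τ, ψ s ∈ Metric.closedBall y (ρ/4) := by
        intro s hs
        have hd : dist s 0 < η := by
          rw [Real.dist_eq, sub_zero, abs_of_nonneg hs.1]
          exact lt_of_le_of_lt hs.2 (lt_of_le_of_lt (min_le_right _ _) (by linarith))
        have := hη hd
        rw [hψ0] at this
        exact Metric.mem_closedBall.mpr this.le
      have hone : 1 ≤ Real.exp (K * τ) := Real.one_le_exp (by positivity)
      -- Gronwall + escape-time argument
      have key : ∀ c : ℝ, 0 ≤ c → dist (x c) y * Real.exp (K * τ) ≤ ρ/4 →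
          ∀ s ∈ Set.Icc (0:ℝ) τ, dist (x (c + s)) (ψ s) ≤ dist (x c) y * Real.exp (K * τ) := by
        intro c hc hsmall
        set g : ℝ → EuclideanSpace ℝ (Fin d) := fun s => x (c + s) with hgdef
        have hg' : ∀ s : ℝ, 0 ≤ s → HasDerivAt g (F (g s)) s := by
          intro s hs
          have h1 := hx (c + s) (by linarith)
          have h2 : HasDerivAt (fun u : ℝ => c + u) 1 s := (hasDerivAt_id s).const_add c
          simpa [hgdef, Function.comp_def] using h1.scomp s h2
        have hδρ : dist (x c) y ≤ ρ/4 :=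
          le_trans (le_mul_of_one_le_right dist_nonneg hone) hsmall
        set A : Set ℝ :=
          {s ∈ Set.Icc 0 τ | ∀ u ∈ Set.Icc 0 s, g u ∈ Metric.closedBall y ρ} with hA
        have h0A : (0:ℝ) ∈ A := by
          refine ⟨⟨le_rfl, hτpos.le⟩, fun u hu => ?_⟩
          have hu0 : u = 0 := le_antisymm hu.2 hu.1
          rw [hu0]
          have : g 0 = x c := by simp [hgdef]
          rw [this]
          exact Metric.mem_closedBall.mpr (by linarith)
        have hAbdd : BddAbove A := ⟨τ, fun s hs => hs.1.2⟩
        have hAne : A.Nonempty := ⟨0, h0A⟩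
        set b := sSup A with hbdef
        have hbmem : b ∈ Set.Icc (0:ℝ) τ :=
          ⟨le_csSup hAbdd h0A, csSup_le hAne fun s hs => hs.1.2⟩
        have gron : ∀ e ∈ A, ∀ s ∈ Set.Icc (0:ℝ) e,
            dist (g s) (ψ s) ≤ dist (x c) y * Real.exp (K * s) := by
          intro e he s hs
          have he' : e ∈ Set.Icc (0:ℝ) τ := he.1
          have hgoal := dist_le_of_trajectories_ODE_of_mem (v := fun _ z => F z)
            (s := fun _ => Metric.closedBall y ρ) (K := K) (fun _ _ => hlip)
            (f := g) (g := ψ) (a := 0) (b := e) (δ := dist (x c) y)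
            (fun u hu => (hg' u hu.1).continuousAt.continuousWithinAt)
            (fun u hu => (hg' u hu.1).hasDerivWithinAt)
            (fun u hu => he.2 u ⟨hu.1, hu.2.le⟩)
            (fun u hu => (hψIcc u ⟨hu.1, le_trans hu.2 he'.2⟩).continuousAt.continuousWithinAt)
            (fun u hu => (hψIcc u ⟨hu.1, le_trans hu.2.le he'.2⟩).hasDerivWithinAt)
            (fun u hu => Metric.closedBall_subset_closedBall (by linarith)
              (hψball u ⟨hu.1, le_trans hu.2.le he'.2⟩))
            (by simp [hgdef, hψ0])
            s hs
          simpa using hgoal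
        have hbA : b ∈ A := by
          refine ⟨hbmem, fun u hu => ?_⟩
          rcases lt_or_eq_of_le hu.2 with hub | hub
          · obtain ⟨a, haA, hua⟩ := exists_lt_of_lt_csSup hAne hub
            exact haA.2 u ⟨hu.1, hua.le⟩
          · rw [hub]
            rcases eq_or_lt_of_le hbmem.1 with h0b | h0b
            · rw [← h0b]
              exact h0A.2 0 ⟨le_rfl, le_rfl⟩
            · haveI : (nhdsWithin b (Set.Ico 0 b)).NeBot := by
                apply mem_closure_iff_nhdsWithin_neBot.mp
                rw [closure_Ico h0b.ne]
                exact ⟨h0b.le, le_rfl⟩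
              have hcg : Filter.Tendsto g (nhdsWithin b (Set.Ico 0 b)) (nhds (g b)) :=
                ((hg' b hbmem.1).continuousAt.tendsto).mono_left nhdsWithin_le_nhds
              refine Metric.isClosed_closedBall.mem_of_tendsto hcg ?_
              apply eventually_nhdsWithin_of_forall
              intro u' hu'
              obtain ⟨a, haA, hua⟩ := exists_lt_of_lt_csSup hAne hu'.2
              exact haA.2 u' ⟨hu'.1, hua.le⟩
        have hbτ : b = τ := by
          by_contra hbne
          have hbτ' : b < τ := lt_of_le_of_ne hbmem.2 hbne
          have h1 : dist (g b) (ψ b) ≤ ρ/4 := by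
            refine le_trans (gron b hbA b ⟨hbmem.1, le_rfl⟩) (le_trans ?_ hsmall)
            exact mul_le_mul_of_nonneg_left (Real.exp_le_exp.mpr
              (mul_le_mul_of_nonneg_left hbmem.2 K.coe_nonneg)) dist_nonneg
          have h2 : dist (ψ b) y ≤ ρ/4 := hψball b hbmem
          have h3 : dist (g b) y ≤ ρ/2 := by
            calc dist (g b) y ≤ dist (g b) (ψ b) + dist (ψ b) y := dist_triangle _ _ _
            _ ≤ ρ/4 + ρ/4 := add_le_add h1 h2
            _ = ρ/2 := by ring
          have hcont : ContinuousAt (fun u => dist (g u) y) b :=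
            ((hg' b hbmem.1).continuousAt.dist continuousAt_const)
          obtain ⟨θ, hθpos, hθ⟩ := Metric.continuousAt_iff.mp hcont (ρ/4) (by linarith)
          set b' := min τ (b + θ/2) with hb'def
          have hb'A : b' ∈ A := by
            refine ⟨⟨le_min hτpos.le (by linarith [hbmem.1]), min_le_left _ _⟩, fun u hu => ?_⟩
            rcases le_or_gt u b with h | h
            · exact hbA.2 u ⟨hu.1, h⟩
            · have hub' : u ≤ b + θ/2 := le_trans hu.2 (min_le_right _ _)
              have hd : dist u b < θ := by
                rw [Real.dist_eq, abs_of_pos (by linarith)]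
                linarith
              have := hθ hd
              rw [Real.dist_eq] at this
              have habs := abs_lt.mp this
              have hlt : dist (g u) y < ρ/2 + ρ/4 := by linarith [habs.2]
              exact Metric.mem_closedBall.mpr (by linarith)
          have hle : b' ≤ b := le_csSup hAbdd hb'A
          have hgt : b < b' := lt_min hbτ' (by linarith)
          linarith
        intro s hs
        refine le_trans (gron τ (hbτ ▸ hbA) s hs) ?_
        exact mul_le_mul_of_nonneg_left (Real.exp_le_exp.mpr
          (mul_le_mul_of_nonneg_left hs.2 K.coe_nonneg)) dist_nonneg
      -- pass to the limit: W ∘ ψ is constant on [0, τ]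
      have hδ0 : Filter.Tendsto (fun n => dist (x ((φ n : ℕ) : ℝ)) y) Filter.atTop (nhds 0) :=
        tendsto_iff_dist_tendsto_zero.mp hφlim
      have hδ0' : Filter.Tendsto (fun n => dist (x ((φ n : ℕ) : ℝ)) y * Real.exp (K * τ))
          Filter.atTop (nhds 0) := by
        simpa using hδ0.mul_const (Real.exp (K * τ))
      have hev : ∀ᶠ n in Filter.atTop,
          dist (x ((φ n : ℕ) : ℝ)) y * Real.exp (K * τ) ≤ ρ/4 := by
        filter_upwards [hδ0'.eventually_lt_const (by linarith : (0:ℝ) < ρ/4)] with n hn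
        exact hn.le
      have hWψ : ∀ s ∈ Set.Icc (0:ℝ) τ, W (ψ s) = L := by
        intro s hs
        have h1 : Filter.Tendsto (fun n => x (((φ n : ℕ) : ℝ) + s)) Filter.atTop (nhds (ψ s)) := by
          rw [tendsto_iff_dist_tendsto_zero]
          apply squeeze_zero' (by filter_upwards with n using dist_nonneg) _ hδ0'
          filter_upwards [hev] with n hn
          exact key ((φ n : ℕ) : ℝ) (Nat.cast_nonneg _) hn s hs
        have h2 : Filter.Tendsto (fun n => W (x (((φ n : ℕ) : ℝ) + s))) Filter.atTop (nhds L) :=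
          hLW.comp (Filter.tendsto_atTop_add_const_right _ s hφatTop)
        have h3 : Filter.Tendsto (fun n => W (x (((φ n : ℕ) : ℝ) + s))) Filter.atTop
            (nhds (W (ψ s))) := (hWc.continuousAt.tendsto).comp h1
        exact tendsto_nhds_unique h3 h2
      -- cascade of vanishing Lie derivatives along ψ
      have hψIoo : ∀ s ∈ Set.Ioo (0:ℝ) τ, HasDerivAt ψ (F (ψ s)) s := fun s hs =>
        hψIcc s ⟨hs.1.le, hs.2.le⟩
      have cascade : ∀ k, k ≤ r → ∀ s ∈ Set.Ioo (0:ℝ) τ,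
          iterLie F k W (ψ s) = if k = 0 then L else 0 := by
        intro k
        induction k with
        | zero =>
          intro _ s hs
          simpa [iterLie] using hWψ s ⟨hs.1.le, hs.2.le⟩
        | succ k ih =>
          intro hk s hs
          have hk' : k ≤ r := Nat.le_of_succ_le hk
          have hder : HasDerivAt (fun u => iterLie F k W (ψ u)) (iterLie F (k+1) W (ψ s)) s :=
            hasDerivAt_iterLie_comp hF hW hrm hk (hψIoo s hs)
          have heqf : (fun u => iterLie F k W (ψ u)) =ᶠ[nhds s]
              (fun _ => if k = 0 then L else 0) := by
            filter_upwards [Ioo_mem_nhds hs.1 hs.2] with u hu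
            exact ih hk' u hu
          have hconst : HasDerivAt (fun _ : ℝ => if k = 0 then L else 0)
              (iterLie F (k+1) W (ψ s)) s := hder.congr_of_eventuallyEq heqf.symm
          have := hconst.unique (hasDerivAt_const s _)
          simpa using this
      -- evaluate at s = 0
      have hvanish : ∀ k ∈ Finset.Icc 1 r, iterLie F k W y = 0 := by
        intro k hk
        rw [Finset.mem_Icc] at hk
        have hcont : ContinuousAt (fun s => iterLie F k W (ψ s)) 0 :=
          ((iterLie_contDiff hF hW hrm k hk.2).continuous.continuousAt).comp hψc0
        haveI : (nhdsWithin (0:ℝ) (Set.Ioo 0 τ)).NeBot := by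
          apply mem_closure_iff_nhdsWithin_neBot.mp
          rw [closure_Ioo hτpos.ne]
          exact ⟨le_rfl, hτpos.le⟩
        have h1 : Filter.Tendsto (fun s => iterLie F k W (ψ s))
            (nhdsWithin 0 (Set.Ioo 0 τ)) (nhds (iterLie F k W y)) := by
          rw [← hψ0]
          exact (hcont.tendsto).mono_left nhdsWithin_le_nhds
        have h2 : Filter.Tendsto (fun s => iterLie F k W (ψ s))
            (nhdsWithin 0 (Set.Ioo 0 τ)) (nhds 0) := by
          refine Filter.Tendsto.congr' ?_ tendsto_const_nhds
          filter_upwards [self_mem_nhdsWithin] with u hu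
          rw [cascade k hk.2 u hu, if_neg (by omega)]
        exact tendsto_nhds_unique h1 h2
      obtain ⟨k, hk, hkne⟩ := hnonzero y ⟨hyP, by simpa using hyne⟩
      exact hkne (hvanish k hk)
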